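/- Optimal exercise of the American put payoff with positive part: fix k ≥ 0 and define the extended stopping times τ̲ᵏ := min{ t ∈ {0,...,N} : K_t ≤ k } and τ̄ᵏ := min{ t ∈ {0,...,N} : K_t < k } (each equal to ∞ if no such t exists). Let τᵏ be any extended stopping time (τᵏ : Ω → {0,...,N} ∪ {∞} with {τᵏ = t} ∈ F_t for t ≤ N) satisfying τ̲ᵏ ≤ τᵏ ≤ τ̄ᵏ a.s. and, a.s. on {τᵏ ≤ N}, min_{0≤v≤τᵏ} K_v = K_{τᵏ}. Then: (a) a.s. on {τᵏ ≤ N}, K_{τᵏ} ≤ k and hence P_{τᵏ} ≤ k; and (b) the stopping time τᵏ ∧ N ∈ T_{0,N} maximizes the expected payoff of the American put with strike k: for every stopping time τ ∈ T_{0,N}, E_0[(1+r)^{-τ}(k - P_τ)⁺] ≤ E_0[(1+r)^{-(τᵏ∧N)}(k - P_{τᵏ∧N})⁺] a.s. -/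

import Mathlib

open MeasureTheory Filter

/-- Running maximum `max_{t ≤ v ≤ u} L v ω` (intended for `t ≤ u`). -/
noncomputable def runMax {Ω : Type*} (L : ℕ → Ω → ℝ) (t u : ℕ) (ω : Ω) : ℝ :=
  (Finset.Icc t u).fold max (L t ω) fun v => L v ω

/-- Running minimum `min_{t ≤ v ≤ u} K v ω` (intended for `t ≤ u`). -/
noncomputable def runMin {Ω : Type*} (K : ℕ → Ω → ℝ) (t u : ℕ) (ω : Ω) : ℝ :=
  (Finset.Icc t u).fold min (K t ω) fun v => K v ω

/-- A discrete-time nonlinear expectation on the horizon `{0, ..., N}`: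
a family of maps `E t` sending square-integrable `F N`-measurable random
variables to square-integrable `F t`-measurable random variables, satisfying
monotonicity, strict monotonicity, translation invariance, the tower property,
the zero-one law and monotone convergence. -/
structure NLExp {Ω : Type*} {m0 : MeasurableSpace Ω} (μ : Measure Ω)
    (F : Filtration ℕ m0) (N : ℕ) where
  E : ℕ → (Ω → ℝ) → Ω → ℝ
  adapted : ∀ t, t ≤ N → ∀ ξ : Ω → ℝ, StronglyMeasurable[F N] ξ → MemLp ξ 2 μ →
    StronglyMeasurable[F t] (E t ξ)
  sqInt : ∀ t, t ≤ N → ∀ ξ : Ω → ℝ, StronglyMeasurable[F N] ξ → MemLp ξ 2 μ →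
    MemLp (E t ξ) 2 μ
  mono : ∀ t, t ≤ N → ∀ ξ η : Ω → ℝ, StronglyMeasurable[F N] ξ → MemLp ξ 2 μ →
    StronglyMeasurable[F N] η → MemLp η 2 μ → ξ ≤ᵐ[μ] η → E t ξ ≤ᵐ[μ] E t η
  strictMono : ∀ t, t ≤ N → ∀ ξ η : Ω → ℝ, StronglyMeasurable[F N] ξ → MemLp ξ 2 μ →
    StronglyMeasurable[F N] η → MemLp η 2 μ → ξ ≤ᵐ[μ] η →
    0 < μ {ω | ξ ω < η ω} → 0 < μ {ω | E t ξ ω < E t η ω}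
  translation : ∀ t, t ≤ N → ∀ ξ ζ : Ω → ℝ, StronglyMeasurable[F N] ξ → MemLp ξ 2 μ →
    StronglyMeasurable[F t] ζ → MemLp ζ 2 μ → E t (ξ + ζ) =ᵐ[μ] E t ξ + ζ
  tower : ∀ s t, s ≤ t → t ≤ N → ∀ ξ : Ω → ℝ, StronglyMeasurable[F N] ξ → MemLp ξ 2 μ →
    E s (E t ξ) =ᵐ[μ] E s ξ
  zeroOne : ∀ t, t ≤ N → ∀ ξ η : Ω → ℝ, StronglyMeasurable[F N] ξ → MemLp ξ 2 μ →
    StronglyMeasurable[F N] η → MemLp η 2 μ → ∀ A : Set Ω, MeasurableSet[F t] A →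
    E t (A.indicator ξ + Aᶜ.indicator η) =ᵐ[μ]
      A.indicator (E t ξ) + Aᶜ.indicator (E t η)
  monoConv : ∀ t, t ≤ N → ∀ (ξs : ℕ → Ω → ℝ) (ξ : Ω → ℝ),
    (∀ n, StronglyMeasurable[F N] (ξs n)) → (∀ n, MemLp (ξs n) 2 μ) →
    StronglyMeasurable[F N] ξ → MemLp ξ 2 μ →
    (∀ᵐ ω ∂μ, (Monotone fun n => ξs n ω) ∨ (Antitone fun n => ξs n ω)) →
    (∀ᵐ ω ∂μ, Tendsto (fun n => ξs n ω) atTop (nhds (ξ ω))) →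
    ∀ᵐ ω ∂μ, Tendsto (fun n => E t (ξs n) ω) atTop (nhds (E t ξ ω))

set_option linter.unusedSectionVars false
set_option maxHeartbeats 1000000

section RM
variable {Ω : Type*} {L K : ℕ → Ω → ℝ} {t u v : ℕ} {ω : Ω} {c : ℝ}

lemma runMax_le (h1 : L t ω ≤ c) (h2 : ∀ v ∈ Finset.Icc t u, L v ω ≤ c) :
    runMax L t u ω ≤ c := (Finset.fold_max_le c).2 ⟨h1, h2⟩

lemma le_runMax_self : L t ω ≤ runMax L t u ω :=
  (Finset.le_fold_max _).2 (Or.inl le_rfl)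

lemma le_runMax (hv : v ∈ Finset.Icc t u) : L v ω ≤ runMax L t u ω :=
  (Finset.le_fold_max _).2 (Or.inr ⟨v, hv, le_rfl⟩)

lemma runMin_le_self : runMin K t u ω ≤ K t ω :=
  (Finset.fold_min_le _).2 (Or.inl le_rfl)

lemma runMin_le (hv : v ∈ Finset.Icc t u) : runMin K t u ω ≤ K v ω :=
  (Finset.fold_min_le _).2 (Or.inr ⟨v, hv, le_rfl⟩)

lemma runMax_self : runMax L t t ω = L t ω := by
  simp [runMax]

lemma runMax_mono_left (h : t ≤ u) : runMax L t u ω ≤ runMax L 0 u ω := by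
  refine runMax_le (le_runMax (by simp [h])) (fun v hv => le_runMax ?_)
  simp at hv ⊢; omega

lemma runMax_add_const :
    runMax (fun v ω' => c + L v ω') t u ω = c + runMax L t u ω := by
  refine le_antisymm (runMax_le (by simpa using le_runMax_self)
    (fun v hv => by simpa using le_runMax hv)) ?_
  have : runMax L t u ω ≤ runMax (fun v ω' => c + L v ω') t u ω - c := by
    refine runMax_le ?_ (fun v hv => ?_)
    · have := le_runMax_self (L := fun v ω' => c + L v ω') (t := t) (u := u) (ω := ω)
      linarith
    · have := le_runMax (L := fun v ω' => c + L v ω') (ω := ω) hv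
      linarith
  linarith

lemma runMax_neg : runMax (fun v ω' => -K v ω') t u ω = - runMin K t u ω := by
  unfold runMax runMin
  induction (Finset.Icc t u) using Finset.induction_on with
  | empty => simp
  | @insert a s hns ih => rw [Finset.fold_insert hns, Finset.fold_insert hns, ih, max_neg_neg]

lemma runMax_sub_eq (k : ℝ) :
    runMax (fun v ω' => k - K v ω') t u ω = k + runMax (fun v ω' => -K v ω') t u ω := by
  rw [← runMax_add_const]; simp [runMax, sub_eq_add_neg]

end RM

section Meas
variable {Ω : Type*} {m : MeasurableSpace Ω} {μ : MeasureTheory.Measure Ω}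
  {L : ℕ → Ω → ℝ} {t u : ℕ}

lemma stronglyMeasurable_runMax (ht : StronglyMeasurable[m] (L t))
    (h : ∀ v ∈ Finset.Icc t u, StronglyMeasurable[m] (L v)) :
    StronglyMeasurable[m] (fun ω => runMax L t u ω) := by
  unfold runMax
  suffices H : ∀ s : Finset ℕ, (∀ v ∈ s, StronglyMeasurable[m] (L v)) →
      StronglyMeasurable[m] (fun ω => s.fold max (L t ω) fun v => L v ω) from H _ h
  intro s hs
  induction s using Finset.induction_on with
  | empty => simpa using ht
  | @insert a s hns ih =>
      simp only [Finset.fold_insert hns]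
      have := (hs a (Finset.mem_insert_self a s)).sup
        (ih (fun v hv => hs v (Finset.mem_insert_of_mem hv)))
      simpa [Pi.sup_def] using this

lemma memℒp_runMax (ht : MemLp (L t) 2 μ) (h : ∀ v ∈ Finset.Icc t u, MemLp (L v) 2 μ) :
    MemLp (fun ω => runMax L t u ω) 2 μ := by
  unfold runMax
  suffices H : ∀ s : Finset ℕ, (∀ v ∈ s, MemLp (L v) 2 μ) →
      MemLp (fun ω => s.fold max (L t ω) fun v => L v ω) 2 μ from H _ h
  intro s hs
  induction s using Finset.induction_on with
  | empty => simpa using ht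
  | @insert a s hns ih =>
      simp only [Finset.fold_insert hns]
      have := (hs a (Finset.mem_insert_self a s)).sup
        (ih (fun v hv => hs v (Finset.mem_insert_of_mem hv)))
      simpa [Pi.sup_def] using this

end Meas

lemma tele_sum {r : ℝ} (hr : 0 < r) {t N : ℕ} (h : t ≤ N) :
    (∑ u ∈ Finset.Ico t N, r / (1 + r) * ((1 + r) ^ u)⁻¹) + ((1 + r) ^ N)⁻¹
      = ((1 + r) ^ t)⁻¹ := by
  have hp : (0:ℝ) < 1 + r := by linarith
  have hne : (1 + r) ≠ 0 := ne_of_gt hp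
  have key : ∀ u : ℕ, r / (1 + r) * ((1 + r) ^ u)⁻¹
      = ((1 + r) ^ u)⁻¹ - ((1 + r) ^ (u + 1))⁻¹ := by
    intro u
    have h2 : ((1:ℝ) + r) ^ u ≠ 0 := pow_ne_zero _ hne
    field_simp
    ring
  simp_rw [key]
  rw [Finset.sum_Ico_eq_sub _ h]
  have tele : ∀ n : ℕ, (∑ u ∈ Finset.range n, (((1+r) ^ u)⁻¹ - ((1+r) ^ (u+1))⁻¹))
      = 1 - ((1+r) ^ n)⁻¹ := by
    intro n
    have := Finset.sum_range_sub' (fun u => ((1+r) ^ u)⁻¹) n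
    simpa using this
  rw [tele, tele]; ring

section NL
variable {Ω : Type*} {m0 : MeasurableSpace Ω} {μ : MeasureTheory.Measure Ω}
  [IsProbabilityMeasure μ] {F : Filtration ℕ m0} {N : ℕ} (EE : NLExp μ F N)

/-- "Good": measurable w.r.t. `F N` and square-integrable. -/
def NLGood {Ω : Type*} {m0 : MeasurableSpace Ω} (μ : MeasureTheory.Measure Ω)
    (F : Filtration ℕ m0) (N : ℕ) (ξ : Ω → ℝ) : Prop :=
  StronglyMeasurable[F N] ξ ∧ MemLp ξ 2 μ

lemma NLGood.E {t : ℕ} (ht : t ≤ N) {ξ : Ω → ℝ} (hξ : NLGood μ F N ξ) :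
    NLGood μ F N (EE.E t ξ) :=
  ⟨(EE.adapted t ht ξ hξ.1 hξ.2).mono (F.mono ht), EE.sqInt t ht ξ hξ.1 hξ.2⟩

lemma NLGood.zero : NLGood μ F N (0 : Ω → ℝ) :=
  ⟨stronglyMeasurable_const, MemLp.zero⟩

lemma NLGood.add {ξ η : Ω → ℝ} (hξ : NLGood μ F N ξ) (hη : NLGood μ F N η) :
    NLGood μ F N (fun ω => ξ ω + η ω) := ⟨hξ.1.add hη.1, hξ.2.add hη.2⟩

lemma NLGood.const_mul {ξ : Ω → ℝ} (hξ : NLGood μ F N ξ) (c : ℝ) :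
    NLGood μ F N (fun ω => c * ξ ω) := ⟨hξ.1.const_mul c, hξ.2.const_mul c⟩

lemma NLGood.max0 {ξ : Ω → ℝ} (hξ : NLGood μ F N ξ) :
    NLGood μ F N (fun ω => max (ξ ω) 0) := by
  constructor
  · have := @MeasureTheory.StronglyMeasurable.sup Ω ℝ ξ (fun _ => (0:ℝ)) (F N) _ _ _
      hξ.1 stronglyMeasurable_const
    simpa [Pi.sup_def] using this
  · have := hξ.2.sup (MemLp.zero (p := 2) (μ := μ))
    simpa [Pi.sup_def] using this

lemma NLGood.csum {c : ℕ → ℝ} {f : ℕ → Ω → ℝ} {s : Finset ℕ}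
    (h : ∀ u ∈ s, NLGood μ F N (f u)) :
    NLGood μ F N (fun ω => ∑ u ∈ s, c u * f u ω) := by
  constructor
  · exact Finset.stronglyMeasurable_fun_sum s (fun u hu => (h u hu).1.const_mul (c u))
  · have : (fun ω => ∑ u ∈ s, c u * f u ω) = ∑ u ∈ s, fun ω => c u * f u ω := by
      funext ω; simp
    rw [this]
    exact memLp_finsetSum' s (fun u hu => (h u hu).2.const_mul (c u))

lemma nlE_mono {t : ℕ} (ht : t ≤ N) {ξ η : Ω → ℝ} (hξ : NLGood μ F N ξ)
    (hη : NLGood μ F N η) (h : ξ ≤ᵐ[μ] η) : EE.E t ξ ≤ᵐ[μ] EE.E t η :=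
  EE.mono t ht ξ η hξ.1 hξ.2 hη.1 hη.2 h

lemma nlE_congr {t : ℕ} (ht : t ≤ N) {ξ η : Ω → ℝ} (hξ : NLGood μ F N ξ)
    (hη : NLGood μ F N η) (h : ξ =ᵐ[μ] η) : EE.E t ξ =ᵐ[μ] EE.E t η :=
  (nlE_mono EE ht hξ hη h.le).antisymm (nlE_mono EE ht hη hξ h.symm.le)

lemma nlE_zero {t : ℕ} (ht : t ≤ N) : EE.E t (0 : Ω → ℝ) =ᵐ[μ] 0 := by
  have h0 : NLGood μ F N (0 : Ω → ℝ) := NLGood.zero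
  have hE0 : NLGood μ F N (EE.E t (0 : Ω → ℝ)) := h0.E EE ht
  have h1 := EE.translation t ht 0 (EE.E t 0) h0.1 h0.2 (EE.adapted t ht 0 h0.1 h0.2) hE0.2
  rw [zero_add] at h1
  have h2 := EE.tower t t le_rfl ht 0 h0.1 h0.2
  filter_upwards [h1, h2] with ω e1 e2
  simp only [Pi.add_apply, Pi.zero_apply] at *
  linarith [e1 ▸ e2]

lemma nlE_const_eval {t : ℕ} (ht : t ≤ N) {ζ : Ω → ℝ}
    (hζm : StronglyMeasurable[F t] ζ) (hζ2 : MemLp ζ 2 μ) : EE.E t ζ =ᵐ[μ] ζ := by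
  have h0 : NLGood μ F N (0 : Ω → ℝ) := NLGood.zero
  have h1 := EE.translation t ht 0 ζ h0.1 h0.2 hζm hζ2
  rw [zero_add] at h1
  filter_upwards [h1, nlE_zero EE ht] with ω e1 e2
  simp only [Pi.add_apply, Pi.zero_apply] at *
  linarith [e1, e2]

lemma nlE_nonneg {t : ℕ} (ht : t ≤ N) {ξ : Ω → ℝ} (hξ : NLGood μ F N ξ)
    (h : 0 ≤ᵐ[μ] ξ) : 0 ≤ᵐ[μ] EE.E t ξ := by
  have := nlE_mono EE ht NLGood.zero hξ h
  filter_upwards [this, nlE_zero EE ht] with ω e1 e2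
  simpa [e2] using e1

lemma nlE_localize {t : ℕ} (ht : t ≤ N) {ξ η : Ω → ℝ} (hξ : NLGood μ F N ξ)
    (hη : NLGood μ F N η) {A : Set Ω} (hA : MeasurableSet[F t] A)
    (h : ∀ᵐ ω ∂μ, ω ∈ A → ξ ω = η ω) :
    ∀ᵐ ω ∂μ, ω ∈ A → EE.E t ξ ω = EE.E t η ω := by
  have hAN : MeasurableSet[F N] A := F.mono ht A hA
  have hAm : MeasurableSet A := F.le t A hA
  have hχ : NLGood μ F N (A.indicator ξ + Aᶜ.indicator η) :=
    ⟨(hξ.1.indicator hAN).add (hη.1.indicator hAN.compl),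
     (hξ.2.indicator hAm).add (hη.2.indicator hAm.compl)⟩
  have h1 := EE.zeroOne t ht ξ η hξ.1 hξ.2 hη.1 hη.2 A hA
  have h2 : (A.indicator ξ + Aᶜ.indicator η) =ᵐ[μ] η := by
    filter_upwards [h] with ω hω
    by_cases hmem : ω ∈ A
    · simp [Set.indicator_apply, hmem, hω hmem]
    · simp [Set.indicator_apply, hmem]
  have h3 := nlE_congr EE ht hχ hη h2
  filter_upwards [h1, h3] with ω e1 e3 hmem
  have := e1.symm.trans e3
  simpa [Set.indicator_apply, hmem] using this

end NL

section Stop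
variable {Ω : Type*} {m0 : MeasurableSpace Ω} {μ : MeasureTheory.Measure Ω}
  [IsProbabilityMeasure μ] {F : Filtration ℕ m0} {N : ℕ} (EE : NLExp μ F N)

lemma stopped_sum_repr {τ : Ω → ℕ} (hτN : ∀ ω, τ ω ≤ N) (f : ℕ → Ω → ℝ) :
    (fun ω => f (τ ω) ω)
      = fun ω => ∑ t ∈ Finset.range (N + 1), ({ω' | τ ω' = t}).indicator (f t) ω := by
  funext ω
  rw [Finset.sum_eq_single (τ ω)]
  · simp [Set.indicator_apply]
  · intro b _ hb
    exact Set.indicator_of_notMem (by simp [Ne.symm hb]) _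
  · intro habs
    exact absurd (Finset.mem_range.2 (Nat.lt_succ_of_le (hτN ω))) habs

lemma stopped_good {τ : Ω → ℕ} (hτ : ∀ t, t ≤ N → MeasurableSet[F t] {ω | τ ω = t})
    (hτN : ∀ ω, τ ω ≤ N) {f : ℕ → Ω → ℝ} (hf : ∀ t, t ≤ N → NLGood μ F N (f t)) :
    NLGood μ F N (fun ω => f (τ ω) ω) := by
  rw [stopped_sum_repr hτN]
  constructor
  · apply Finset.stronglyMeasurable_fun_sum
    intro t htm
    have ht : t ≤ N := Nat.lt_succ_iff.1 (Finset.mem_range.1 htm)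
    exact (hf t ht).1.indicator (F.mono ht _ (hτ t ht))
  · have : (fun ω => ∑ t ∈ Finset.range (N + 1), ({ω' | τ ω' = t}).indicator (f t) ω)
        = ∑ t ∈ Finset.range (N + 1), ({ω' | τ ω' = t}).indicator (f t) := by
      funext ω; simp
    rw [this]
    apply memLp_finsetSum'
    intro t htm
    have ht : t ≤ N := Nat.lt_succ_iff.1 (Finset.mem_range.1 htm)
    exact (hf t ht).2.indicator (F.le t _ (hτ t ht))

/-- Tower property at a stopping time: `E 0 [E_τ[X]] = E 0 [X]`. -/
lemma nlE_tower_stop {τ : Ω → ℕ} (hτ : ∀ t, t ≤ N → MeasurableSet[F t] {ω | τ ω = t})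
    (hτN : ∀ ω, τ ω ≤ N) {X : Ω → ℝ} (hX : NLGood μ F N X) :
    EE.E 0 (fun ω => EE.E (τ ω) X ω) =ᵐ[μ] EE.E 0 X := by
  set V : ℕ → Ω → ℝ := fun s ω => if τ ω < s then EE.E (τ ω) X ω else X ω with hV
  have hVgood : ∀ s, NLGood μ F N (V s) := by
    intro s
    have : V s = fun ω => (fun t ω' => if t < s then EE.E t X ω' else X ω') (τ ω) ω := by
      funext ω; simp [hV]
    rw [this]
    refine stopped_good (μ := μ) hτ hτN
      (f := fun t ω' => if t < s then EE.E t X ω' else X ω') (fun t ht => ?_)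
    by_cases hts : t < s
    · have e : (fun ω' => if t < s then EE.E t X ω' else X ω') = EE.E t X := by
        funext ω'; rw [if_pos hts]
      show NLGood μ F N (fun ω' => if t < s then EE.E t X ω' else X ω')
      rw [e]; exact hX.E EE ht
    · have e : (fun ω' => if t < s then EE.E t X ω' else X ω') = X := by
        funext ω'; rw [if_neg hts]
      show NLGood μ F N (fun ω' => if t < s then EE.E t X ω' else X ω')
      rw [e]; exact hX
  have key : ∀ s, s ≤ N → EE.E 0 (V (s + 1)) =ᵐ[μ] EE.E 0 (V s) := by
    intro s hs
    set A : Set Ω := {ω | τ ω = s} with hA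
    have hAms : MeasurableSet[F s] A := hτ s hs
    have hEsX : NLGood μ F N (EE.E s X) := hX.E EE hs
    have e1 : V (s + 1) = A.indicator (EE.E s X) + Aᶜ.indicator (V s) := by
      funext ω
      by_cases hm : τ ω = s
      · simp [hV, Set.indicator_apply, hA, hm]
      · have : τ ω < s + 1 ↔ τ ω < s := by omega
        simp [hV, Set.indicator_apply, hA, hm, this]
    have e2 : V s = A.indicator X + Aᶜ.indicator (V s) := by
      funext ω
      by_cases hm : τ ω = s
      · simp [hV, Set.indicator_apply, hA, hm]
      · simp [Set.indicator_apply, hA, hm]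
    have z1 := EE.zeroOne s hs (EE.E s X) (V s) hEsX.1 hEsX.2 (hVgood s).1 (hVgood s).2 A hAms
    have z2 := EE.zeroOne s hs X (V s) hX.1 hX.2 (hVgood s).1 (hVgood s).2 A hAms
    have tw := EE.tower s s le_rfl hs X hX.1 hX.2
    have hEs : EE.E s (V (s + 1)) =ᵐ[μ] EE.E s (V s) := by
      rw [← e2] at z2
      rw [e1]
      filter_upwards [z1, z2, tw] with ω w1 w2 w3
      rw [w1]
      by_cases hm : ω ∈ A
      · calc (A.indicator (EE.E s (EE.E s X)) + Aᶜ.indicator (EE.E s (V s))) ω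
            = EE.E s (EE.E s X) ω := by simp [Set.indicator_apply, hm]
          _ = EE.E s X ω := w3
          _ = EE.E s (V s) ω := by rw [w2]; simp [Set.indicator_apply, hm]
      · simp [Set.indicator_apply, hm]
    have g1 : NLGood μ F N (EE.E s (V (s+1))) := (hVgood (s+1)).E EE hs
    have g2 : NLGood μ F N (EE.E s (V s)) := (hVgood s).E EE hs
    calc EE.E 0 (V (s+1)) =ᵐ[μ] EE.E 0 (EE.E s (V (s+1))) :=
          (EE.tower 0 s (Nat.zero_le s) hs _ (hVgood (s+1)).1 (hVgood (s+1)).2).symm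
      _ =ᵐ[μ] EE.E 0 (EE.E s (V s)) := nlE_congr EE (Nat.zero_le N) g1 g2 hEs
      _ =ᵐ[μ] EE.E 0 (V s) := EE.tower 0 s (Nat.zero_le s) hs _ (hVgood s).1 (hVgood s).2
  have main : ∀ s, s ≤ N + 1 → EE.E 0 (V s) =ᵐ[μ] EE.E 0 X := by
    intro s
    induction s with
    | zero =>
        intro _
        have : V 0 = X := by funext ω; simp [hV]
        rw [this]
    | succ n ih =>
        intro hn
        exact (key n (by omega)).trans (ih (by omega))
  have hfin : V (N + 1) = fun ω => EE.E (τ ω) X ω := by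
    funext ω; simp [hV, Nat.lt_succ_of_le (hτN ω)]
  rw [← hfin]
  exact main (N + 1) le_rfl

end Stop

/-- **Optimal exercise of the American put payoff with positive part.** Let `τᵏ` be
an extended stopping time with `τ̲ᵏ ≤ τᵏ ≤ τ̄ᵏ` a.s. and, a.s. on `{τᵏ ≤ N}`,
`min_{0≤v≤τᵏ} K_v = K_{τᵏ}`. Then (a) a.s. on `{τᵏ ≤ N}`, `K_{τᵏ} ≤ k` and
`P_{τᵏ} ≤ k`; and (b) `τᵏ ∧ N ∈ T_{0,N}` maximizes the expected payoff of the
American put with strike `k`: for every stopping time `τ ∈ T_{0,N}`,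
`E 0 [(1+r)^{-τ}(k - P_τ)⁺] ≤ E 0 [(1+r)^{-(τᵏ∧N)}(k - P_{τᵏ∧N})⁺]` a.s. -/
theorem american_put_positive_part_optimal
{Ω : Type*} [TopologicalSpace Ω] [PolishSpace Ω]
    [m0 : MeasurableSpace Ω] [BorelSpace Ω]
    (μ : Measure Ω) [IsProbabilityMeasure μ]
    (F : Filtration ℕ m0) (N : ℕ) (hN : 1 ≤ N)
    (EE : NLExp μ F N)
    (r : ℝ) (hr : 0 < r)
    (S : ℕ → Ω → ℝ)
    (hS_adapted : ∀ t, t ≤ N → StronglyMeasurable[F t] (S t))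
    (hS_sqInt : ∀ t, t ≤ N → MemLp (fun ω => ((1 + r) ^ t)⁻¹ * S t ω) 2 μ)
(K : ℕ → Ω → ℝ)
    (hK_adapted : ∀ t, t ≤ N → StronglyMeasurable[F t] (K t))
    (hK_sqInt : ∀ t, t ≤ N → MemLp (K t) 2 μ)
    (hK_rep : ∀ t, t ≤ N →
      (fun ω => -(((1 + r) ^ t)⁻¹ * S t ω)) =ᵐ[μ] EE.E t fun ω =>
        (∑ u ∈ Finset.Ico t N,
          r / (1 + r) * ((1 + r) ^ u)⁻¹ * runMax (fun v ω' => -K v ω') t u ω)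
        + ((1 + r) ^ N)⁻¹ * runMax (fun v ω' => -K v ω') t N ω)
    (k : ℝ) (hk : 0 ≤ k)
    (τlowk τbark : Ω → ℕ∞)
    (hτlowk_def : ∀ ω, τlowk ω = ⨅ (t : ℕ) (_ : t ≤ N ∧ K t ω ≤ k), (t : ℕ∞))
    (hτbark_def : ∀ ω, τbark ω = ⨅ (t : ℕ) (_ : t ≤ N ∧ K t ω < k), (t : ℕ∞))
    (τk : Ω → ℕ∞)
    (hτk_meas : ∀ t : ℕ, t ≤ N → MeasurableSet[F t] {ω | τk ω = (t : ℕ∞)})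
    (hτk_range : ∀ ω, τk ω ≤ (N : ℕ∞) ∨ τk ω = ⊤)
    (hbetween : ∀ᵐ ω ∂μ, τlowk ω ≤ τk ω ∧ τk ω ≤ τbark ω)
    (hmin : ∀ᵐ ω ∂μ, τk ω ≤ (N : ℕ∞) →
      runMin K 0 (τk ω).toNat ω = K (τk ω).toNat ω) :
    (∀ᵐ ω ∂μ, τk ω ≤ (N : ℕ∞) →
      K (τk ω).toNat ω ≤ k ∧ S (τk ω).toNat ω ≤ k) ∧
    ∀ τ : Ω → ℕ, IsStoppingTime F (fun ω => (τ ω : WithTop ℕ)) → (∀ ω, τ ω ≤ N) →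
      EE.E 0 (fun ω => ((1 + r) ^ (τ ω))⁻¹ * max (k - S (τ ω) ω) 0) ≤ᵐ[μ]
      EE.E 0 fun ω => ((1 + r) ^ ((min (τk ω) (N : ℕ∞)).toNat))⁻¹ *
        max (k - S ((min (τk ω) (N : ℕ∞)).toNat) ω) 0 := by
    classical
  have hp : (0:ℝ) < 1 + r := by linarith
  have hqpos : ∀ u : ℕ, (0:ℝ) < ((1 + r) ^ u)⁻¹ := fun u => inv_pos.2 (pow_pos hp u)
  have hanneg : ∀ u : ℕ, (0:ℝ) ≤ r / (1 + r) * ((1 + r) ^ u)⁻¹ :=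
    fun u => mul_nonneg (div_nonneg hr.le hp.le) (hqpos u).le
  have hKg : ∀ v, v ≤ N → NLGood μ F N (K v) :=
    fun v hv => ⟨(hK_adapted v hv).mono (F.mono hv), hK_sqInt v hv⟩
  have hSg : ∀ t, t ≤ N → NLGood μ F N (S t) := by
    intro t ht
    refine ⟨(hS_adapted t ht).mono (F.mono ht), ?_⟩
    have h1 := (hS_sqInt t ht).const_mul ((1 + r) ^ t)
    have h2 : (fun ω => (1 + r) ^ t * (((1 + r) ^ t)⁻¹ * S t ω)) = S t := by
      funext ω
      rw [← mul_assoc, mul_inv_cancel₀ (ne_of_gt (pow_pos hp t)), one_mul]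
    rwa [h2] at h1
  set G : ℕ → Ω → ℝ := fun t ω =>
    (∑ u ∈ Finset.Ico t N, r / (1 + r) * ((1 + r) ^ u)⁻¹ *
        runMax (fun v ω' => -K v ω') t u ω)
      + ((1 + r) ^ N)⁻¹ * runMax (fun v ω' => -K v ω') t N ω with hGdef
  set Y : ℕ → Ω → ℝ := fun t ω =>
    (∑ u ∈ Finset.Ico t N, r / (1 + r) * ((1 + r) ^ u)⁻¹ *
        runMax (fun v ω' => k - K v ω') t u ω)
      + ((1 + r) ^ N)⁻¹ * runMax (fun v ω' => k - K v ω') t N ω with hYdef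
  set W : Ω → ℝ := fun ω =>
    (∑ u ∈ Finset.Ico 0 N, r / (1 + r) * ((1 + r) ^ u)⁻¹ *
        max (runMax (fun v ω' => k - K v ω') 0 u ω) 0)
      + ((1 + r) ^ N)⁻¹ * max (runMax (fun v ω' => k - K v ω') 0 N ω) 0 with hWdef
  -- goodness of runMax-built processes
  have hrmg : ∀ (L : ℕ → Ω → ℝ), (∀ v, v ≤ N → NLGood μ F N (L v)) →
      ∀ t u, t ≤ N → u ≤ N → NLGood μ F N (fun ω => runMax L t u ω) := by
    intro L hL t u htN huN
    constructor
    · exact stronglyMeasurable_runMax (hL t htN).1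
        (fun v hv => (hL v (le_trans (Finset.mem_Icc.1 hv).2 huN)).1)
    · exact memℒp_runMax (hL t htN).2
        (fun v hv => (hL v (le_trans (Finset.mem_Icc.1 hv).2 huN)).2)
  have hnegKg : ∀ v, v ≤ N → NLGood μ F N (fun ω => -K v ω) := by
    intro v hv
    have := (hKg v hv).const_mul (-1)
    simpa [neg_one_mul] using this
  have hconstg : ∀ c : ℝ, NLGood μ F N (fun _ => c) :=
    fun c => ⟨stronglyMeasurable_const, memLp_const c⟩
  have hkKg : ∀ v, v ≤ N → NLGood μ F N (fun ω => k - K v ω) := by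
    intro v hv
    have := (hconstg k).add (hnegKg v hv)
    simpa [sub_eq_add_neg] using this
  have hGg : ∀ t, t ≤ N → NLGood μ F N (G t) := by
    intro t ht
    simp only [hGdef]
    exact NLGood.add
      (NLGood.csum (fun u hu => hrmg _ hnegKg t u ht (le_of_lt (Finset.mem_Ico.1 hu).2)))
      ((hrmg _ hnegKg t N ht le_rfl).const_mul _)
  have hYg : ∀ t, t ≤ N → NLGood μ F N (Y t) := by
    intro t ht
    simp only [hYdef]
    exact NLGood.add
      (NLGood.csum (fun u hu => hrmg _ hkKg t u ht (le_of_lt (Finset.mem_Ico.1 hu).2)))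
      ((hrmg _ hkKg t N ht le_rfl).const_mul _)
  have hWg : NLGood μ F N W := by
    simp only [hWdef]
    exact NLGood.add
      (NLGood.csum (fun u hu =>
        (hrmg _ hkKg 0 u (Nat.zero_le N) (le_of_lt (Finset.mem_Ico.1 hu).2)).max0))
      (((hrmg _ hkKg 0 N (Nat.zero_le N) le_rfl).max0).const_mul _)
  have htele : ∀ t, t ≤ N →
      (∑ u ∈ Finset.Ico t N, r / (1 + r) * ((1 + r) ^ u)⁻¹) + ((1 + r) ^ N)⁻¹
        = ((1 + r) ^ t)⁻¹ := fun t ht => tele_sum hr ht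
  have hYG : ∀ t, t ≤ N → Y t = fun ω => G t ω + ((1 + r) ^ t)⁻¹ * k := by
    intro t ht
    funext ω
    simp only [hYdef, hGdef]
    simp_rw [runMax_sub_eq k, mul_add, Finset.sum_add_distrib, ← Finset.sum_mul]
    have h2 := htele t ht
    linear_combination k * h2
  have hEY : ∀ t, t ≤ N →
      (fun ω => ((1 + r) ^ t)⁻¹ * (k - S t ω)) =ᵐ[μ] EE.E t (Y t) := by
    intro t ht
    have hrep : (fun ω => -(((1 + r) ^ t)⁻¹ * S t ω)) =ᵐ[μ] EE.E t (G t) := by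
      simp only [hGdef]; exact hK_rep t ht
    have htr := EE.translation t ht (G t) (fun _ => ((1 + r) ^ t)⁻¹ * k)
      (hGg t ht).1 (hGg t ht).2 stronglyMeasurable_const (memLp_const _)
    have hYeq : Y t = G t + (fun _ => ((1 + r) ^ t)⁻¹ * k) := by
      rw [hYG t ht]; funext ω; simp
    rw [← hYeq] at htr
    filter_upwards [htr, hrep] with ω e1 e2
    simp only [Pi.add_apply] at e1 e2
    rw [e1, ← e2]
    ring
  have hSK : ∀ t, t ≤ N → S t ≤ᵐ[μ] K t := by
    intro t ht
    have hGlb : ∀ ω, ((1 + r) ^ t)⁻¹ * (-K t ω) ≤ G t ω := by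
      intro ω
      simp only [hGdef]
      have h2 := Finset.sum_le_sum (fun u (hu : u ∈ Finset.Ico t N) =>
        mul_le_mul_of_nonneg_left (le_runMax_self (L := fun v ω' => -K v ω')
          (t := t) (u := u) (ω := ω)) (hanneg u))
      have h3 : ((1+r)^N)⁻¹ * (-K t ω)
          ≤ ((1+r)^N)⁻¹ * runMax (fun v ω' => -K v ω') t N ω :=
        mul_le_mul_of_nonneg_left (le_runMax_self (L := fun v ω' => -K v ω')
          (t := t) (u := N) (ω := ω)) (hqpos N).le
      have h4 : (∑ u ∈ Finset.Ico t N, r / (1 + r) * ((1 + r) ^ u)⁻¹ * (-K t ω))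
          = (∑ u ∈ Finset.Ico t N, r / (1 + r) * ((1 + r) ^ u)⁻¹) * (-K t ω) :=
        (Finset.sum_mul _ _ _).symm
      have h5 := htele t ht
      have h6 : ((1+r)^t)⁻¹ * (-K t ω)
          = (∑ u ∈ Finset.Ico t N, r / (1+r) * ((1+r)^u)⁻¹) * (-K t ω)
            + ((1+r)^N)⁻¹ * (-K t ω) := by rw [← h5]; ring
      rw [h6, ← h4]
      linarith
    have hζm : StronglyMeasurable[F t] (fun ω => ((1 + r) ^ t)⁻¹ * (-K t ω)) :=
      ((hK_adapted t ht).neg).const_mul _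
    have hζ2 : MemLp (fun ω => ((1 + r) ^ t)⁻¹ * (-K t ω)) 2 μ :=
      ((hK_sqInt t ht).neg).const_mul _
    have hce := nlE_const_eval EE ht hζm hζ2
    have hgoodζ : NLGood μ F N (fun ω => ((1+r)^t)⁻¹ * (-K t ω)) :=
      (hnegKg t ht).const_mul _
    have hm := nlE_mono EE ht hgoodζ (hGg t ht) (Filter.Eventually.of_forall hGlb)
    have hrep : (fun ω => -(((1 + r) ^ t)⁻¹ * S t ω)) =ᵐ[μ] EE.E t (G t) := by
      simp only [hGdef]; exact hK_rep t ht
    filter_upwards [hce, hm, hrep] with ω e1 e2 e3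
    have hq := hqpos t
    have h7 : ((1+r)^t)⁻¹ * S t ω ≤ ((1+r)^t)⁻¹ * K t ω := by
      have h8 : ((1+r)^t)⁻¹ * (-K t ω) = -(((1+r)^t)⁻¹ * K t ω) := by ring
      linarith [e1, e2, e3]
    exact le_of_mul_le_mul_left h7 hq
  have hSN : S N =ᵐ[μ] K N := by
    have hGN : G N = fun ω => ((1 + r) ^ N)⁻¹ * (-K N ω) := by
      funext ω; simp only [hGdef]; rw [runMax_self]; simp
    have hrep : (fun ω => -(((1 + r) ^ N)⁻¹ * S N ω)) =ᵐ[μ] EE.E N (G N) := by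
      simp only [hGdef]; exact hK_rep N le_rfl
    rw [hGN] at hrep
    have hζm : StronglyMeasurable[F N] (fun ω => ((1 + r) ^ N)⁻¹ * (-K N ω)) :=
      ((hK_adapted N le_rfl).neg).const_mul _
    have hce := nlE_const_eval EE le_rfl hζm (((hK_sqInt N le_rfl).neg).const_mul _)
    filter_upwards [hrep, hce] with ω e1 e2
    have hq := hqpos N
    have h3 : ((1+r)^N)⁻¹ * S N ω = ((1+r)^N)⁻¹ * K N ω := by
      have h4 : ((1+r)^N)⁻¹ * (-K N ω) = -(((1+r)^N)⁻¹ * K N ω) := by ring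
      linarith [e1, e2]
    exact mul_left_cancel₀ (ne_of_gt hq) h3
  -- pointwise combinatorial facts from the optional-stopping hypotheses
  have hpoint : ∀ᵐ ω ∂μ,
      (τk ω ≤ (N:ℕ∞) → K ((τk ω).toNat) ω ≤ k ∧ ∀ v < (τk ω).toNat, k ≤ K v ω) ∧
      (τk ω = ⊤ → ∀ v ≤ N, k ≤ K v ω) := by
    filter_upwards [hbetween, hmin] with ω hb hm
    obtain ⟨hb1, hb2⟩ := hb
    constructor
    · intro hle
      have hnetop : τk ω ≠ ⊤ := by intro h; rw [h] at hle; simp at hle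
      have htt : ((τk ω).toNat : ℕ∞) = τk ω := ENat.coe_toNat hnetop
      set t := (τk ω).toNat with hts
      have htN : t ≤ N := by rw [← htt] at hle; exact_mod_cast hle
      have hii : ∀ v, v < t → k ≤ K v ω := by
        intro v hv
        by_contra hlt
        push_neg at hlt
        have h1 : τbark ω ≤ (v:ℕ∞) := by
          rw [hτbark_def ω]
          exact iInf_le_of_le v (iInf_le _ ⟨le_trans (le_of_lt hv) htN, hlt⟩)
        have h2 : τk ω ≤ (v:ℕ∞) := le_trans hb2 h1
        rw [← htt] at h2
        have : t ≤ v := by exact_mod_cast h2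
        omega
      refine ⟨?_, hii⟩
      obtain ⟨s, hs1, hs2⟩ : ∃ s, s ≤ t ∧ K s ω ≤ k := by
        by_contra hno
        push_neg at hno
        have h1 : (((t+1 : ℕ)) : ℕ∞) ≤ τlowk ω := by
          rw [hτlowk_def ω]
          refine le_iInf fun s => le_iInf fun hsP => ?_
          have hst : t < s := by
            by_contra hcon
            push_neg at hcon
            exact absurd hsP.2 (not_le.2 (hno s hcon))
          exact_mod_cast hst
        have h2 : τlowk ω ≤ τk ω := hb1
        rw [← htt] at h2
        have h3 : ((t+1:ℕ):ℕ∞) ≤ ((t:ℕ):ℕ∞) := le_trans h1 h2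
        have : t + 1 ≤ t := by exact_mod_cast h3
        omega
      have hmm := hm hle
      have hrm : runMin K 0 t ω ≤ K s ω :=
        runMin_le (by simp [Finset.mem_Icc]; omega)
      linarith
    · intro htop v hv
      by_contra hlt
      push_neg at hlt
      have hbt : τbark ω = ⊤ := top_le_iff.1 (htop ▸ hb2)
      have h1 : τbark ω ≤ (v:ℕ∞) := by
        rw [hτbark_def ω]; exact iInf_le_of_le v (iInf_le _ ⟨hv, hlt⟩)
      rw [hbt] at h1
      exact absurd h1 (by simp)
  -- the stopping time σ = τk ∧ N
  set σ : Ω → ℕ := fun ω => (min (τk ω) (N:ℕ∞)).toNat with hσdef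
  have hσN : ∀ ω, σ ω ≤ N := by
    intro ω
    simp only [hσdef]
    rcases hτk_range ω with h | h
    · rw [min_eq_left h]
      have hne : τk ω ≠ ⊤ := by intro hx; rw [hx] at h; simp at h
      have hc := ENat.coe_toNat hne
      rw [← hc] at h
      exact_mod_cast h
    · rw [h]; simp
  have hσcoe : ∀ (ω : Ω) (t : ℕ), τk ω = (t:ℕ∞) → t ≤ N → σ ω = t := by
    intro ω t h htN
    simp only [hσdef, h]
    rw [min_eq_left (by exact_mod_cast htN)]
    exact ENat.toNat_coe t
  have hσtop : ∀ ω, τk ω = ⊤ → σ ω = N := by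
    intro ω h; simp only [hσdef, h]; simp
  have hσeq : ∀ t, t ≤ N → MeasurableSet[F t] {ω | σ ω = t} := by
    intro t ht
    by_cases htN : t < N
    · have hset : {ω | σ ω = t} = {ω | τk ω = (t:ℕ∞)} := by
        ext ω
        simp only [Set.mem_setOf_eq]
        constructor
        · intro h
          rcases hτk_range ω with hc | hc
          · have hne : τk ω ≠ ⊤ := by intro hx; rw [hx] at hc; simp at hc
            have hcoe := ENat.coe_toNat hne
            have hσω : σ ω = (τk ω).toNat := by
              simp only [hσdef]; rw [min_eq_left hc]
            rw [hσω] at h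
            rw [← hcoe, h]
          · exfalso; rw [hσtop ω hc] at h; omega
        · intro h; exact hσcoe ω t h (le_of_lt htN)
      rw [hset]
      exact hτk_meas t (le_of_lt htN)
    · have hteq : t = N := by omega
      rw [hteq]
      have hset : {ω | σ ω = N} = (⋃ s ∈ Finset.range N, {ω | τk ω = (s:ℕ∞)})ᶜ := by
        ext ω
        constructor
        · intro h hmem
          rw [Set.mem_iUnion₂] at hmem
          obtain ⟨s, hs, hcon⟩ := hmem
          have hs' : s < N := by simpa using hs
          have hcon' : τk ω = (s:ℕ∞) := hcon
          have h' : σ ω = N := h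
          rw [hσcoe ω s hcon' (le_of_lt hs')] at h'
          omega
        · intro h
          have h' : ∀ s, s < N → τk ω ≠ (s:ℕ∞) := by
            intro s hs hx
            exact h (Set.mem_biUnion (Finset.mem_coe.2 (Finset.mem_range.2 hs)) hx)
          show σ ω = N
          rcases hτk_range ω with hc | hc
          · have hne : τk ω ≠ ⊤ := by intro hx; rw [hx] at hc; simp at hc
            have hcoe := ENat.coe_toNat hne
            have hnN : (τk ω).toNat ≤ N := by
              rw [← hcoe] at hc; exact_mod_cast hc
            rcases Nat.lt_or_ge (τk ω).toNat N with hlt | hge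
            · exact absurd hcoe.symm (h' (τk ω).toNat hlt)
            · have heq : (τk ω).toNat = N := by omega
              exact hσcoe ω N (by rw [← hcoe, heq]) le_rfl
          · exact hσtop ω hc
      rw [hset]
      refine MeasurableSet.compl ?_
      refine MeasurableSet.biUnion (Finset.range N).countable_toSet (fun s hs => ?_)
      have hs2 : s ∈ Finset.range N := hs
      have hsN : s < N := Finset.mem_range.1 hs2
      exact F.mono (le_of_lt hsN) _ (hτk_meas s (le_of_lt hsN))
  -- a.e. pointwise structure of W versus Y
  have hWY : ∀ᵐ ω ∂μ, ∀ t, t ≤ N → τk ω = (t:ℕ∞) → W ω = Y t ω := by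
    filter_upwards [hpoint] with ω hpt
    intro t htN htk
    have hle : τk ω ≤ (N:ℕ∞) := by rw [htk]; exact_mod_cast htN
    obtain ⟨hKt', hKv'⟩ := hpt.1 hle
    rw [htk, ENat.toNat_coe] at hKt' hKv'
    have hM : ∀ u, t ≤ u → u ≤ N →
        max (runMax (fun v ω' => k - K v ω') 0 u ω) 0
          = runMax (fun v ω' => k - K v ω') t u ω := by
      intro u htu huN
      have hge : k - K t ω ≤ runMax (fun v ω' => k - K v ω') t u ω :=
        le_runMax_self (L := fun v ω' => k - K v ω') (t := t) (u := u) (ω := ω)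
      have hge0 : 0 ≤ runMax (fun v ω' => k - K v ω') t u ω := by linarith
      have hle2 : runMax (fun v ω' => k - K v ω') 0 u ω
          ≤ runMax (fun v ω' => k - K v ω') t u ω := by
        refine runMax_le ?_ (fun v hv => ?_)
        · rcases Nat.eq_zero_or_pos t with h0 | h0
          · rw [h0]
            exact le_runMax_self (L := fun v ω' => k - K v ω') (t := 0) (u := u) (ω := ω)
          · have := hKv' 0 h0; linarith
        · simp only [Finset.mem_Icc] at hv
          rcases lt_or_ge v t with hvt | hvt
          · have := hKv' v hvt; linarith
          · exact le_runMax (L := fun v ω' => k - K v ω') (t := t) (u := u) (v := v)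
              (ω := ω) (by simp only [Finset.mem_Icc]; omega)
      rw [max_eq_left (le_trans hge0 (runMax_mono_left htu))]
      exact le_antisymm hle2 (runMax_mono_left htu)
    have hM0 : ∀ u, u < t → max (runMax (fun v ω' => k - K v ω') 0 u ω) 0 = 0 := by
      intro u hut
      rw [max_eq_right]
      refine runMax_le ?_ (fun v hv => ?_)
      · have := hKv' 0 (by omega); linarith
      · simp only [Finset.mem_Icc] at hv
        have := hKv' v (by omega); linarith
    simp only [hWdef, hYdef]
    rw [← Finset.sum_Ico_consecutive _ (Nat.zero_le t) htN]
    have hz : (∑ u ∈ Finset.Ico 0 t, r / (1+r) * ((1+r)^u)⁻¹ *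
        max (runMax (fun v ω' => k - K v ω') 0 u ω) 0) = 0 :=
      Finset.sum_eq_zero (fun u hu => by rw [hM0 u (Finset.mem_Ico.1 hu).2]; ring)
    rw [hz, zero_add]
    have hs2 : (∑ u ∈ Finset.Ico t N, r / (1+r) * ((1+r)^u)⁻¹ *
        max (runMax (fun v ω' => k - K v ω') 0 u ω) 0)
        = ∑ u ∈ Finset.Ico t N, r / (1+r) * ((1+r)^u)⁻¹ *
            runMax (fun v ω' => k - K v ω') t u ω :=
      Finset.sum_congr rfl (fun u hu => by
        rw [hM u (Finset.mem_Ico.1 hu).1 (le_of_lt (Finset.mem_Ico.1 hu).2)])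
    rw [hs2, hM N htN le_rfl]
  have hWtop : ∀ᵐ ω ∂μ, τk ω = ⊤ → W ω = 0 := by
    filter_upwards [hpoint] with ω hpt htop
    have hKv := hpt.2 htop
    have hM0 : ∀ u, u ≤ N → max (runMax (fun v ω' => k - K v ω') 0 u ω) 0 = 0 := by
      intro u huN
      rw [max_eq_right]
      refine runMax_le ?_ (fun v hv => ?_)
      · have := hKv 0 (Nat.zero_le N); linarith
      · simp only [Finset.mem_Icc] at hv
        have := hKv v (by omega); linarith
    simp only [hWdef]
    rw [hM0 N le_rfl, Finset.sum_eq_zero (fun u hu => by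
      rw [hM0 u (le_of_lt (Finset.mem_Ico.1 hu).2)]; ring)]
    ring
  have hYleW : ∀ t, t ≤ N → ∀ ω, Y t ω ≤ W ω := by
    intro t ht ω
    simp only [hYdef, hWdef]
    have h1 : (∑ u ∈ Finset.Ico t N, r / (1+r) * ((1+r)^u)⁻¹ *
          runMax (fun v ω' => k - K v ω') t u ω)
        ≤ ∑ u ∈ Finset.Ico t N, r / (1+r) * ((1+r)^u)⁻¹ *
            max (runMax (fun v ω' => k - K v ω') 0 u ω) 0 :=
      Finset.sum_le_sum (fun u hu => mul_le_mul_of_nonneg_left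
        (le_trans (runMax_mono_left (Finset.mem_Ico.1 hu).1) (le_max_left _ _)) (hanneg u))
    have h2 : (∑ u ∈ Finset.Ico t N, r / (1+r) * ((1+r)^u)⁻¹ *
          max (runMax (fun v ω' => k - K v ω') 0 u ω) 0)
        ≤ ∑ u ∈ Finset.Ico 0 N, r / (1+r) * ((1+r)^u)⁻¹ *
            max (runMax (fun v ω' => k - K v ω') 0 u ω) 0 :=
      Finset.sum_le_sum_of_subset_of_nonneg
        (Finset.Ico_subset_Ico (Nat.zero_le t) le_rfl)
        (fun u _ _ => mul_nonneg (hanneg u) (le_max_right _ _))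
    have h3 : ((1+r)^N)⁻¹ * runMax (fun v ω' => k - K v ω') t N ω
        ≤ ((1+r)^N)⁻¹ * max (runMax (fun v ω' => k - K v ω') 0 N ω) 0 :=
      mul_le_mul_of_nonneg_left
        (le_trans (runMax_mono_left ht) (le_max_left _ _)) (hqpos N).le
    linarith
  have hW0 : ∀ ω, 0 ≤ W ω := by
    intro ω
    simp only [hWdef]
    have h1 := Finset.sum_nonneg (s := Finset.Ico 0 N)
      (f := fun u => r / (1+r) * ((1+r)^u)⁻¹ *
        max (runMax (fun v ω' => k - K v ω') 0 u ω) 0)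
      (fun u _ => mul_nonneg (hanneg u) (le_max_right _ _))
    have h2 : (0:ℝ) ≤ ((1+r)^N)⁻¹ * max (runMax (fun v ω' => k - K v ω') 0 N ω) 0 :=
      mul_nonneg (hqpos N).le (le_max_right _ _)
    linarith
  have hf_good : ∀ t, t ≤ N →
      NLGood μ F N (fun ω => ((1 + r) ^ t)⁻¹ * max (k - S t ω) 0) := by
    intro t ht
    have hks : NLGood μ F N (fun ω => k - S t ω) := by
      have h1 := (hSg t ht).const_mul (-1)
      have := (hconstg k).add h1
      simpa [sub_eq_add_neg, neg_one_mul] using this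
    exact (hks.max0).const_mul _
  have hZt : ∀ t, t ≤ N →
      ∀ᵐ ω ∂μ, ((1 + r) ^ t)⁻¹ * max (k - S t ω) 0 ≤ EE.E t W ω := by
    intro t ht
    have h1 := nlE_mono EE ht (hYg t ht) hWg (Filter.Eventually.of_forall (hYleW t ht))
    have h2 := nlE_nonneg EE ht hWg (Filter.Eventually.of_forall hW0)
    filter_upwards [h1, h2, hEY t ht] with ω e1 e2 e3
    simp only [Pi.zero_apply] at e2
    have h4 : ((1 + r) ^ t)⁻¹ * max (k - S t ω) 0
        = max (((1+r)^t)⁻¹ * (k - S t ω)) 0 := by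
      rw [mul_max_of_nonneg _ _ (hqpos t).le, mul_zero]
    rw [h4]
    have e3' : ((1+r)^t)⁻¹ * (k - S t ω) = EE.E t (Y t) ω := e3
    rw [e3']
    exact max_le e1 e2
  have hEW0 : ∀ t, t ≤ N → ∀ᵐ ω ∂μ, 0 ≤ EE.E t W ω := by
    intro t ht
    have := nlE_nonneg EE ht hWg (Filter.Eventually.of_forall hW0)
    filter_upwards [this] with ω e
    simpa using e
  have hLoc : ∀ t, t ≤ N →
      ∀ᵐ ω ∂μ, τk ω = (t:ℕ∞) → EE.E t (Y t) ω = EE.E t W ω := by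
    intro t ht
    have hprem : ∀ᵐ ω ∂μ, ω ∈ {ω' | τk ω' = (t:ℕ∞)} → Y t ω = W ω := by
      filter_upwards [hWY] with ω e hm
      exact (e t ht hm).symm
    have := nlE_localize EE ht (hYg t ht) hWg (hτk_meas t ht) hprem
    filter_upwards [this] with ω e hm
    exact e hm
  have hENW := nlE_const_eval EE le_rfl hWg.1 hWg.2
  have hallt : ∀ᵐ ω ∂μ, ∀ t, t ≤ N →
      (((1+r)^t)⁻¹ * (k - S t ω) = EE.E t (Y t) ω) ∧
      (τk ω = (t:ℕ∞) → EE.E t (Y t) ω = EE.E t W ω) ∧ (0 ≤ EE.E t W ω) := by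
    refine ae_all_iff.2 fun t => ?_
    by_cases ht : t ≤ N
    · filter_upwards [hEY t ht, hLoc t ht, hEW0 t ht] with ω e1 e2 e3 _
      exact ⟨e1, e2, e3⟩
    · exact Filter.Eventually.of_forall (fun ω h => absurd h ht)
  have hZσV : (fun ω => ((1 + r) ^ (σ ω))⁻¹ * max (k - S (σ ω) ω) 0)
      =ᵐ[μ] (fun ω => EE.E (σ ω) W ω) := by
    filter_upwards [hallt, hWtop, hENW, hSN, hpoint] with ω ha hWt hEN hSNω hpt
    rcases hτk_range ω with hc | hc
    · have hne : τk ω ≠ ⊤ := by intro hx; rw [hx] at hc; simp at hc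
      have htt : ((τk ω).toNat : ℕ∞) = τk ω := ENat.coe_toNat hne
      set t := (τk ω).toNat with hts
      have htN : t ≤ N := by rw [← htt] at hc; exact_mod_cast hc
      have hσω : σ ω = t := hσcoe ω t htt.symm htN
      rw [hσω]
      obtain ⟨e1, e2, e3⟩ := ha t htN
      have e2' := e2 htt.symm
      rw [mul_max_of_nonneg _ _ (hqpos t).le, mul_zero, e1, e2']
      exact max_eq_left e3
    · have hσω : σ ω = N := hσtop ω hc
      rw [hσω]
      have hKN := hpt.2 hc N le_rfl
      rw [hSNω, hEN, hWt hc, max_eq_right (by linarith)]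
      ring
  constructor
  · -- part (a)
    have hSKall : ∀ᵐ ω ∂μ, ∀ t, t ≤ N → S t ω ≤ K t ω := by
      refine ae_all_iff.2 fun t => ?_
      by_cases ht : t ≤ N
      · filter_upwards [hSK t ht] with ω e _; exact e
      · exact Filter.Eventually.of_forall fun ω h => absurd h ht
    filter_upwards [hpoint, hSKall] with ω hpt hsk hle
    have hne : τk ω ≠ ⊤ := by intro hx; rw [hx] at hle; simp at hle
    have htc := ENat.coe_toNat hne
    have htN : (τk ω).toNat ≤ N := by
      rw [← htc] at hle; exact_mod_cast hle
    obtain ⟨h1, _⟩ := hpt.1 hle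
    exact ⟨h1, le_trans (hsk _ htN) h1⟩
  · -- part (b)
    intro τ hτstop hτN
    have hτeq : ∀ t, t ≤ N → MeasurableSet[F t] {ω | τ ω = t} :=
      fun t _ => by simpa using hτstop.measurableSet_eq t
    have hfτ : NLGood μ F N (fun ω => ((1 + r) ^ (τ ω))⁻¹ * max (k - S (τ ω) ω) 0) :=
      stopped_good (μ := μ) hτeq hτN
        (f := fun t ω => ((1 + r) ^ t)⁻¹ * max (k - S t ω) 0) hf_good
    have hVτg : NLGood μ F N (fun ω => EE.E (τ ω) W ω) :=
      stopped_good (μ := μ) hτeq hτN (f := fun t => EE.E t W) (fun t ht => hWg.E EE ht)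
    have hfσ : NLGood μ F N (fun ω => ((1 + r) ^ (σ ω))⁻¹ * max (k - S (σ ω) ω) 0) :=
      stopped_good (μ := μ) hσeq hσN
        (f := fun t ω => ((1 + r) ^ t)⁻¹ * max (k - S t ω) 0) hf_good
    have hVσg : NLGood μ F N (fun ω => EE.E (σ ω) W ω) :=
      stopped_good (μ := μ) hσeq hσN (f := fun t => EE.E t W) (fun t ht => hWg.E EE ht)
    have hZτall : ∀ᵐ ω ∂μ, ∀ t, t ≤ N →
        ((1+r)^t)⁻¹ * max (k - S t ω) 0 ≤ EE.E t W ω := by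
      refine ae_all_iff.2 fun t => ?_
      by_cases ht : t ≤ N
      · filter_upwards [hZt t ht] with ω e _; exact e
      · exact Filter.Eventually.of_forall fun ω h => absurd h ht
    have step1 : EE.E 0 (fun ω => ((1 + r) ^ (τ ω))⁻¹ * max (k - S (τ ω) ω) 0)
        ≤ᵐ[μ] EE.E 0 (fun ω => EE.E (τ ω) W ω) := by
      refine nlE_mono EE (Nat.zero_le N) hfτ hVτg ?_
      filter_upwards [hZτall] with ω h
      exact h (τ ω) (hτN ω)
    have step2 := nlE_tower_stop EE hτeq hτN hWg
    have step3 := nlE_tower_stop EE hσeq hσN hWg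
    have step4 : EE.E 0 (fun ω => EE.E (σ ω) W ω)
        =ᵐ[μ] EE.E 0 (fun ω => ((1 + r) ^ (σ ω))⁻¹ * max (k - S (σ ω) ω) 0) :=
      nlE_congr EE (Nat.zero_le N) hVσg hfσ hZσV.symm
    have hgoal : EE.E 0 (fun ω => ((1 + r) ^ (τ ω))⁻¹ * max (k - S (τ ω) ω) 0)
        ≤ᵐ[μ] EE.E 0 (fun ω => ((1 + r) ^ (σ ω))⁻¹ * max (k - S (σ ω) ω) 0) := by
      filter_upwards [step1, step2, step3, step4] with ω e1 e2 e3 e4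
      linarith
    exact hgoal
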